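/- There exist an instance I, a procedure P', and a family of procedures (P_i)_{i≥1}, all with safe scope and using only full tgds, such that for every i, any scoped knowledge base (J, Γ, Scope) representing outcomes_{P_i, P'}(I) must have an instance J containing at least 2^i tuples. -/

import Mathlib

/-- Domain of values. -/
abbrev Val := ℕ
/-- Variables. -/
abbrev Var := ℕ
/-- Relation names. -/
abbrev RelName := ℕ
/-- A relational instance assigns a set of tuples to each relation name. -/
abbrev Instance := RelName → Set (List Val)

/-- Instance extension (inclusion). -/
def Instance.le (I J : Instance) : Prop := ∀ R, I R ⊆ J R

/-- A relational atom `R(x₁,…,xₖ)`. -/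
structure Atom where
  rel : RelName
  args : List Var

/-- Satisfaction of an atom under an assignment. -/
def holdsAtom (I : Instance) (ν : Var → Val) (a : Atom) : Prop :=
  a.args.map ν ∈ I a.rel

/-- A tuple-generating dependency, given by its body and head conjunctions. -/
structure TGD where
  body : List Atom
  head : List Atom

/-- Variables occurring in the body of a tgd. -/
def TGD.bodyVar (t : TGD) (v : Var) : Prop := ∃ a ∈ t.body, v ∈ a.args

/-- Satisfaction of a tgd: every assignment satisfying the body extends to one
satisfying the head. -/
def satTGD (I : Instance) (t : TGD) : Prop :=
  ∀ ν : Var → Val, (∀ a ∈ t.body, holdsAtom I ν a) →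
    ∃ ν' : Var → Val, (∀ v, t.bodyVar v → ν' v = ν v) ∧ ∀ a ∈ t.head, holdsAtom I ν' a

/-- A full tgd has no existential variables in its head. -/
def FullTGD (t : TGD) : Prop := ∀ a ∈ t.head, ∀ v ∈ a.args, t.bodyVar v

/-- A set of tgds is acyclic: the relation-dependency graph (edge from a body
relation to a head relation) has no cycle, witnessed by a rank function. -/
def AcyclicTGDs (ts : List TGD) : Prop :=
  ∃ rank : RelName → ℕ, ∀ t ∈ ts, ∀ a ∈ t.body, ∀ b ∈ t.head, rank a.rel < rank b.rel

/-- Finiteness of an instance (finitely many facts overall). -/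
def FiniteInst (I : Instance) : Prop := {p : RelName × List Val | p.2 ∈ I p.1}.Finite

/-- Relations appearing in heads of a set of tgds (the scope of a safe-scope procedure). -/
def headRels (ts : List TGD) : Set RelName := { R | ∃ t ∈ ts, ∃ b ∈ t.head, b.rel = R }

/-- Outcomes of applying a procedure with safe scope (identified with its set of
postcondition tgds): extensions of `I` satisfying the tgds, where all relations
outside the scope (the head relations) are unchanged. -/
def safeOutcomes (ts : List TGD) (I : Instance) : Set Instance :=
  { J | Instance.le I J ∧ (∀ t ∈ ts, satTGD J t) ∧ ∀ R, R ∉ headRels ts → I R = J R }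

/-- Outcomes of a sequence of procedures with safe scope. -/
def safeSeqOutcomes : List (List TGD) → Instance → Set Instance
  | [], I => {I}
  | Γ :: rest, I => ⋃ J ∈ safeOutcomes Γ I, safeSeqOutcomes rest J

/-- A boolean conjunctive query: a conjunction of atoms, all variables existential. -/
abbrev BCQ := List Atom

/-- Satisfaction of a boolean conjunctive query. -/
def holdsBCQ (I : Instance) (q : BCQ) : Prop :=
  ∃ ν : Var → Val, ∀ a ∈ q, holdsAtom I ν a

/-- The set of instances represented by a scoped knowledge base `(I, Γ, Scope)`. -/
def repSKB (I : Instance) (Γ : List TGD) (Scope : Set RelName) : Set Instance :=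
  { J | Instance.le I J ∧ (∀ t ∈ Γ, satTGD J t) ∧ ∀ R, R ∉ Scope → I R = J R }

/-- Minimal members of a set of instances. -/
def MinimalIn (S : Set Instance) (J : Instance) : Prop :=
  J ∈ S ∧ ∀ K ∈ S, Instance.le K J → K = J

/-- The set of facts of an instance. -/
def tupleSet (I : Instance) : Set (RelName × List Val) := {p | p.2 ∈ I p.1}

namespace SKBProof

/-- The cube of all 0/1 tuples of length i. -/
def cubeE (i : ℕ) : Set (List Val) := {s | s.length = i ∧ ∀ v ∈ s, v = 0 ∨ v = 1}

/-- The initial instance. -/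
def Ifix : Instance := fun R => if R = 0 then {[0],[1]} else ∅

/-- P_i : R(x₀) ∧ … ∧ R(x_{i-1}) → T(x₀,…,x_{i-1}). -/
def Ptgd (i : ℕ) : TGD :=
  ⟨(List.range i).map (fun j => ⟨0, [j]⟩), [⟨1, List.range i⟩]⟩

/-- P' : T(x) → R(x). -/
def Qtgd : TGD := ⟨[⟨1, [0]⟩], [⟨0, [0]⟩]⟩

/-- Explicit description of the outcome set. -/
def Sset (i : ℕ) : Set Instance :=
  {K | cubeE i ⊆ K 1 ∧ ({[0],[1]} : Set (List Val)) ⊆ K 0 ∧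
    (∀ v : Val, [v] ∈ K 1 → [v] ∈ K 0) ∧ ∀ R, R ≠ 0 → R ≠ 1 → K R = ∅}

lemma mem_headRels_P (i : ℕ) (R : RelName) : R ∈ headRels [Ptgd i] ↔ R = 1 := by
  simp [headRels, Ptgd, eq_comm]

lemma mem_headRels_Q (R : RelName) : R ∈ headRels [Qtgd] ↔ R = 0 := by
  simp [headRels, Qtgd, eq_comm]

lemma bodyVar_P (i : ℕ) (v : Var) : (Ptgd i).bodyVar v ↔ v < i := by
  simp [TGD.bodyVar, Ptgd]

lemma satP (i : ℕ) (K : Instance) :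
    satTGD K (Ptgd i) ↔
      ∀ ν : Var → Val, (∀ j < i, [ν j] ∈ K 0) → (List.range i).map ν ∈ K 1 := by
  constructor
  · intro hs ν hb
    obtain ⟨ν', hag, hh⟩ := hs ν (by
      intro a ha
      simp only [Ptgd, List.mem_map, List.mem_range] at ha
      obtain ⟨j, hj, rfl⟩ := ha
      simpa [holdsAtom] using hb j hj)
    have := hh ⟨1, List.range i⟩ (by simp [Ptgd])
    have hmap : (List.range i).map ν' = (List.range i).map ν := by
      apply List.map_congr_left
      intro x hx
      exact hag x ((bodyVar_P i x).2 (List.mem_range.1 hx))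
    simpa [holdsAtom, hmap] using this
  · intro h ν hb
    refine ⟨ν, fun v _ => rfl, ?_⟩
    intro a ha
    simp only [Ptgd, List.mem_singleton] at ha
    subst ha
    simp only [holdsAtom]
    apply h
    intro j hj
    have := hb ⟨0, [j]⟩ (by
      simp only [Ptgd, List.mem_map, List.mem_range]
      exact ⟨j, hj, rfl⟩)
    simpa [holdsAtom] using this

lemma satQ (K : Instance) :
    satTGD K Qtgd ↔ ∀ v : Val, [v] ∈ K 1 → [v] ∈ K 0 := by
  constructor
  · intro hs v hv
    obtain ⟨ν', hag, hh⟩ := hs (fun _ => v) (by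
      intro a ha
      simp only [Qtgd, List.mem_singleton] at ha
      subst ha
      simpa [holdsAtom] using hv)
    have h0 : ν' 0 = v := hag 0 ⟨⟨1, [0]⟩, by simp [Qtgd]⟩
    have := hh ⟨0, [0]⟩ (by simp [Qtgd])
    simpa [holdsAtom, h0] using this
  · intro h ν hb
    refine ⟨ν, fun v _ => rfl, ?_⟩
    intro a ha
    simp only [Qtgd, List.mem_singleton] at ha
    subst ha
    have := hb ⟨1, [0]⟩ (by simp [Qtgd])
    simp only [holdsAtom] at this ⊢
    simpa using h (ν 0) (by simpa using this)

lemma outcomes_eq (i : ℕ) :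
    safeSeqOutcomes [[Ptgd i], [Qtgd]] Ifix = Sset i := by
  ext K
  simp only [safeSeqOutcomes, Set.mem_iUnion, Set.mem_singleton_iff, exists_prop]
  constructor
  · rintro ⟨J, hJ, K', hK', rfl⟩
    obtain ⟨hIJ, hsatJ, hscJ⟩ := hJ
    obtain ⟨hJK, hsatK, hscK⟩ := hK'
    have hJ0 : J 0 = {[0], [1]} := by
      have := hscJ 0 (by simp [mem_headRels_P])
      simpa [Ifix] using this.symm
    have hJR : ∀ R, R ≠ 0 → R ≠ 1 → J R = ∅ := by
      intro R h0 h1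
      have := hscJ R (by rw [mem_headRels_P]; exact h1)
      simpa [Ifix, h0] using this.symm
    have hcube : cubeE i ⊆ J 1 := by
      intro s hs
      obtain ⟨hlen, hmem⟩ := hs
      have := (satP i J).1 (hsatJ (Ptgd i) (by simp)) (fun j => s.getD j 0) (by
        intro j hj
        show [s.getD j 0] ∈ J 0
        have hjs : j < s.length := by omega
        have hgd : s.getD j 0 = s[j] := List.getD_eq_getElem s 0 hjs
        have := hmem s[j] (List.getElem_mem hjs)
        rcases this with h | h <;> simp [hJ0, List.getElem?_eq_getElem hjs, h])
      have heq : (List.range i).map (fun j => s.getD j 0) = s := by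
        apply List.ext_getElem
        · simp [hlen]
        · intro j h1 h2
          simp [List.getElem?_eq_getElem h2]
      rwa [heq] at this
    have hK1 : K 1 = J 1 := (hscK 1 (by simp [mem_headRels_Q])).symm
    refine ⟨?_, ?_, ?_, ?_⟩
    · rw [hK1]; exact hcube
    · rw [← hJ0]; exact hJK 0
    · intro v hv
      exact (satQ K).1 (hsatK Qtgd (by simp)) v hv
    · intro R h0 h1
      have := hscK R (by rw [mem_headRels_Q]; exact h0)
      rw [← this]
      exact hJR R h0 h1
  · rintro ⟨h1, h0, hsing, hemp⟩
    refine ⟨fun R => if R = 0 then {[0],[1]} else K R, ⟨?_, ?_, ?_⟩, K, ⟨?_, ?_, ?_⟩, rfl⟩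
    · intro R
      by_cases h : R = 0 <;> simp [Ifix, h]
    · intro t ht
      simp only [List.mem_singleton] at ht
      subst ht
      rw [satP]
      intro ν hb
      simp only [if_neg (by omega : (1:ℕ) ≠ 0)]
      apply h1
      constructor
      · simp
      · intro v hv
        simp only [List.mem_map, List.mem_range] at hv
        obtain ⟨j, hj, rfl⟩ := hv
        have := hb j hj
        simpa using this
    · intro R hR
      rw [mem_headRels_P] at hR
      by_cases h : R = 0
      · simp [Ifix, h]
      · simp only [Ifix, if_neg h]
        rw [hemp R h hR]
    · intro R
      by_cases h : R = 0 <;> simp [h]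
      exact h0
    · intro t ht
      simp only [List.mem_singleton] at ht
      subst ht
      rw [satQ]
      exact hsing
    · intro R hR
      rw [mem_headRels_Q] at hR
      simp [if_neg hR]

/-- The minimal outcome. -/
def Kmin (i : ℕ) : Instance :=
  fun R => if R = 0 then {[0],[1]} else if R = 1 then cubeE i else ∅

lemma Kmin_mem (i : ℕ) : Kmin i ∈ Sset i := by
  refine ⟨?_, ?_, ?_, ?_⟩
  · intro s hs; simp [Kmin, hs]
  · intro s hs; simp [Kmin, hs]
  · intro v hv
    simp only [Kmin, if_neg (by omega : (1:ℕ) ≠ 0), if_pos rfl] at hv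
    obtain ⟨-, hm⟩ := hv
    have := hm v (by simp)
    rcases this with h | h <;> simp [Kmin, h]
  · intro R h0 h1; simp [Kmin, h0, h1]

/-- Key lemma: any SKB representing `Sset i` contains the whole cube in relation 1. -/
lemma cube_subset_of_rep (i : ℕ) (hi : 1 ≤ i) (J : Instance) (Γ : List TGD)
    (Scope : Set RelName) (hrep : repSKB J Γ Scope = Sset i) :
    cubeE i ⊆ J 1 := by
  have hK0 : Kmin i ∈ repSKB J Γ Scope := by rw [hrep]; exact Kmin_mem i
  obtain ⟨hJK0, -, hsc0⟩ := hK0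
  intro t ht
  by_contra htJ
  -- 1 must be in Scope
  have h1S : (1 : RelName) ∈ Scope := by
    by_contra h
    have := hsc0 1 h
    simp only [Kmin, if_neg (show ¬ (1:ℕ) = 0 by omega), if_pos rfl] at this
    rw [this] at htJ
    exact htJ ht
  -- the perturbed instance K'
  obtain ⟨K', hK1, hKo⟩ : ∃ K' : Instance, K' 1 = cubeE i \ {t} ∧
      ∀ R, R ≠ 1 → K' R = Kmin i R :=
    ⟨fun R => if R = 1 then cubeE i \ {t} else Kmin i R, by simp, fun R hR => by simp [hR]⟩
  have hK'notS : K' ∉ Sset i := by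
    intro h
    have h2 := h.1 ht
    rw [hK1] at h2
    exact h2.2 rfl
  have hle : Instance.le J K' := by
    intro R s hs
    by_cases h : R = 1
    · subst h
      rw [hK1]
      refine ⟨?_, ?_⟩
      · have := hJK0 1 hs
        simpa [Kmin] using this
      · rintro rfl; exact htJ hs
    · rw [hKo R h]
      exact hJK0 R hs
  have hsc' : ∀ R ∉ Scope, J R = K' R := by
    intro R hR
    have hR1 : R ≠ 1 := fun h => hR (h ▸ h1S)
    rw [hsc0 R hR, hKo R hR1]
  -- extract a violated tgd
  have hviol : ∃ g ∈ Γ, ¬ satTGD K' g := by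
    by_contra h
    push_neg at h
    have : K' ∈ repSKB J Γ Scope := ⟨hle, h, hsc'⟩
    rw [hrep] at this
    exact hK'notS this
  obtain ⟨g, hg, hgv⟩ := hviol
  simp only [satTGD, not_forall] at hgv
  obtain ⟨ν, hbody, hnowit⟩ := hgv
  push_neg at hnowit
  -- a constant c with replicate i c ≠ t
  obtain ⟨c, hc01, hct⟩ : ∃ c : Val, (c = 0 ∨ c = 1) ∧ List.replicate i c ≠ t := by
    obtain ⟨n, hn⟩ : ∃ n, i = n + 1 := ⟨i - 1, by omega⟩
    by_cases h0 : t.headI = 0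
    · refine ⟨1, Or.inr rfl, ?_⟩
      intro h
      have : t.headI = 1 := by rw [← h, hn]; rfl
      rw [h0] at this
      exact absurd this (by decide)
    · refine ⟨0, Or.inl rfl, ?_⟩
      intro h
      have : t.headI = 0 := by rw [← h, hn]; rfl
      exact h0 this
  -- the retraction
  obtain ⟨hmap, hsec, h01⟩ : ∃ h : Val → Val,
      (∀ w, h (w + 2) = w) ∧ ∀ v : Val, v = 0 ∨ v = 1 → h v = c := by
    refine ⟨fun v => if v < 2 then c else v - 2, ?_, ?_⟩
    · intro w
      show (if w + 2 < 2 then c else w + 2 - 2) = w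
      rw [if_neg (Nat.not_lt.mpr (Nat.le_add_left 2 w))]
      simp
    · rintro v (rfl | rfl) <;> simp
  -- the pullback instance N
  obtain ⟨N, hN⟩ : ∃ N : Instance, ∀ R (s : List Val), s ∈ N R ↔ s.map hmap ∈ K' R :=
    ⟨fun R => {s | s.map hmap ∈ K' R}, fun R s => Iff.rfl⟩
  have hNS : N ∈ Sset i := by
    have hmem0 : ∀ x : Val, x = 0 ∨ x = 1 → ([x] : List Val) ∈ K' 0 := by
      intro x hx
      rw [hKo 0 (by decide)]
      rcases hx with h | h <;> simp [Kmin, h]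
    refine ⟨?_, ?_, ?_, ?_⟩
    · intro s hs
      obtain ⟨hlen, hmem⟩ := hs
      rw [hN, hK1]
      have hms : s.map hmap = List.replicate i c := by
        rw [List.eq_replicate_iff]
        refine ⟨by simp [hlen], ?_⟩
        intro b hb
        simp only [List.mem_map] at hb
        obtain ⟨v, hv, rfl⟩ := hb
        exact h01 v (hmem v hv)
      rw [hms]
      refine ⟨⟨by simp, ?_⟩, hct⟩
      intro v hv
      rcases List.eq_of_mem_replicate hv with rfl
      exact hc01
    · intro s hs
      simp only [Set.mem_insert_iff, Set.mem_singleton_iff] at hs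
      rcases hs with rfl | rfl
      · rw [hN]; simpa [h01 0 (Or.inl rfl)] using hmem0 c hc01
      · rw [hN]; simpa [h01 1 (Or.inr rfl)] using hmem0 c hc01
    · intro v hv
      rw [hN] at hv ⊢
      simp only [List.map_cons, List.map_nil] at hv ⊢
      rw [hK1] at hv
      have := hv.1.2 (hmap v) (by simp)
      exact hmem0 (hmap v) this
    · intro R h0 h1
      ext s
      change N R s ↔ s ∈ (∅ : Set (List Val))
      constructor
      · intro hs
        have := (hN R s).1 hs
        rw [hKo R h1] at this
        simp [Kmin, h0, h1] at this
      · intro hs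
        exact absurd hs (Set.notMem_empty s)
  have hNrep : N ∈ repSKB J Γ Scope := by rw [hrep]; exact hNS
  have hNsat : satTGD N g := hNrep.2.1 g hg
  obtain ⟨ν', hag, hh⟩ := hNsat (fun x => ν x + 2) (by
    intro a ha
    simp only [holdsAtom]
    rw [hN, List.map_map]
    have hco : (hmap ∘ fun x => ν x + 2) = ν := funext fun x => hsec (ν x)
    rw [hco]
    exact hbody a ha)
  obtain ⟨a, ha, hnot⟩ := hnowit (fun v => hmap (ν' v)) (by
    intro v hv
    show hmap (ν' v) = ν v
    rw [hag v hv]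
    exact hsec (ν v))
  apply hnot
  have := hh a ha
  simp only [holdsAtom] at this ⊢
  rw [hN] at this
  rw [List.map_map] at this
  exact this

lemma count_lemma (i : ℕ) (J : Instance) (hc : cubeE i ⊆ J 1) :
    2 ^ i ≤ (tupleSet J).ncard ∨ (tupleSet J).Infinite := by
  by_cases hfin : (tupleSet J).Finite
  · left
    set e : (Fin i → Fin 2) → RelName × List Val :=
      fun f => (1, List.ofFn fun j => (f j : ℕ)) with hedef
    have he : Function.Injective e := by
      intro f g hfg
      simp only [hedef, Prod.mk.injEq, true_and, List.ofFn_inj] at hfg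
      funext j
      have := congrFun hfg j
      exact Fin.ext this
    have hsub : Set.range e ⊆ tupleSet J := by
      rintro p ⟨f, rfl⟩
      simp only [hedef, tupleSet, Set.mem_setOf_eq]
      apply hc
      constructor
      · simp
      · intro v hv
        simp only [List.mem_ofFn] at hv
        obtain ⟨j, hj⟩ := hv
        have hj' : ((f j : ℕ)) = v := hj
        have h2 : ((f j : ℕ)) = 0 ∨ ((f j : ℕ)) = 1 := by
          have := (f j).isLt
          omega
        rw [← hj']
        exact h2
    calc 2 ^ i = Nat.card (Fin i → Fin 2) := by
          simp [Nat.card_eq_fintype_card]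
      _ = Nat.card (Set.range e) := (Nat.card_range_of_injective he).symm
      _ = (Set.range e).ncard := (Nat.card_coe_set_eq _)
      _ ≤ (tupleSet J).ncard := Set.ncard_le_ncard hsub hfin
  · right; exact hfin

end SKBProof

/-- Exponential lower bound on SKB representations: there are an instance `I`,
a procedure `P'` and a family of procedures `P_i`, all with safe scope and
using only full tgds, such that any SKB `(J, Γ, Scope)` representing
`outcomes_{P_i,P'}(I)` must have at least `2^i` tuples in `J`. -/
theorem skb_representation_exponential_blowup :
    ∃ (I : Instance) (P' : List TGD) (Pfam : ℕ → List TGD),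
      AcyclicTGDs P' ∧ (∀ t ∈ P', FullTGD t) ∧
      (∀ i, AcyclicTGDs (Pfam i) ∧ ∀ t ∈ Pfam i, FullTGD t) ∧
      ∀ i, 1 ≤ i →
        ∀ (J : Instance) (Γ : List TGD) (Scope : Set RelName),
          repSKB J Γ Scope = safeSeqOutcomes [Pfam i, P'] I →
          2 ^ i ≤ (tupleSet J).ncard ∨ (tupleSet J).Infinite := by
  refine ⟨SKBProof.Ifix, [SKBProof.Qtgd], fun i => [SKBProof.Ptgd i], ?_, ?_, ?_, ?_⟩
  · refine ⟨fun R => if R = 0 then 1 else 0, ?_⟩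
    intro t ht a ha b hb
    simp only [List.mem_singleton] at ht
    subst ht
    simp only [SKBProof.Qtgd, List.mem_singleton] at ha hb
    subst ha; subst hb
    simp
  · intro t ht
    simp only [List.mem_singleton] at ht
    subst ht
    intro a ha v hv
    simp only [SKBProof.Qtgd, List.mem_singleton] at ha
    subst ha
    simp only [List.mem_singleton] at hv
    subst hv
    exact ⟨⟨1, [0]⟩, by simp [SKBProof.Qtgd]⟩
  · intro i
    constructor
    · refine ⟨id, ?_⟩
      intro t ht a ha b hb
      simp only [List.mem_singleton] at ht
      subst ht
      simp only [SKBProof.Ptgd, List.mem_singleton, List.mem_map, List.mem_range] at ha hb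
      obtain ⟨j, hj, rfl⟩ := ha
      subst hb
      simp
    · intro t ht
      simp only [List.mem_singleton] at ht
      subst ht
      intro a ha v hv
      simp only [SKBProof.Ptgd, List.mem_singleton] at ha
      subst ha
      simp only [List.mem_range] at hv
      exact (SKBProof.bodyVar_P i v).2 hv
  · intro i hi J Γ Scope hrep
    rw [SKBProof.outcomes_eq i] at hrep
    exact SKBProof.count_lemma i J (SKBProof.cube_subset_of_rep i hi J Γ Scope hrep)
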